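/- Let κ > 0. There is an N₀ such that for all even N ≥ N₀ the following holds. Let (p_1,…,p_N) be a probability distribution on [N] with (1/2)∑_{i=1}^N |p_i − 1/N| ≥ κ. Let M be a perfect matching on [N] chosen uniformly at random, and let S be the set of edges (i,j) ∈ M such that p_i/p_j + p_j/p_i ≥ 2 + κ²/16 (where the condition is stipulated to hold whenever p_i = 0 or p_j = 0). Then with probability at least 1/3 over the choice of M (equivalently, for at least a 1/3 fraction of all perfect matchings of [N]), we have ∑_{(i,j)∈S} (p_i + p_j) ≥ κ/12. -/

import Mathlib

open Finset

/-- A perfect matching on `Fin N`, encoded as a fixed-point-free involution: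
each edge of the matching is an unordered pair `{i, π i}`. -/
def IsPerfectMatching {N : ℕ} (π : Equiv.Perm (Fin N)) : Prop :=
  (∀ i, π (π i) = i) ∧ ∀ i, π i ≠ i

instance {N : ℕ} : DecidablePred (IsPerfectMatching (N := N)) := fun _ =>
  instDecidableAnd

namespace Ume
variable {N : ℕ}

def MM (N : ℕ) : Finset (Equiv.Perm (Fin N)) := univ.filter IsPerfectMatching

def cM (N : ℕ) (j i : Fin N) : ℕ :=
  (univ.filter fun π : Equiv.Perm (Fin N) => IsPerfectMatching π ∧ π j = i).card

def c2M (N : ℕ) (j j' i i' : Fin N) : ℕ :=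
  (univ.filter fun π : Equiv.Perm (Fin N) =>
    IsPerfectMatching π ∧ π j = i ∧ π j' = i').card

lemma isPM_conj (σ π : Equiv.Perm (Fin N)) (h : IsPerfectMatching π) :
    IsPerfectMatching (σ * π * σ⁻¹) := by
  obtain ⟨h1, h2⟩ := h
  constructor
  · intro i
    simp [Equiv.Perm.mul_apply, h1]
  · intro i hi
    apply h2 (σ.symm i)
    simp only [Equiv.Perm.mul_apply] at hi
    have := congrArg σ.symm hi
    simpa using this

lemma filter_conj_card (σ : Equiv.Perm (Fin N)) (P Q : Equiv.Perm (Fin N) → Prop)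
    [DecidablePred P] [DecidablePred Q]
    (hPQ : ∀ π, IsPerfectMatching π → P π → Q (σ * π * σ⁻¹))
    (hQP : ∀ π, IsPerfectMatching π → Q π → P (σ⁻¹ * π * σ)) :
    (univ.filter fun π => IsPerfectMatching π ∧ P π).card
      = (univ.filter fun π => IsPerfectMatching π ∧ Q π).card := by
  apply Finset.card_bij' (fun π _ => σ * π * σ⁻¹) (fun π _ => σ⁻¹ * π * σ)
  · intro π hπ
    simp only [mem_filter, mem_univ, true_and] at hπ ⊢
    exact ⟨isPM_conj σ π hπ.1, hPQ π hπ.1 hπ.2⟩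
  · intro π hπ
    simp only [mem_filter, mem_univ, true_and] at hπ ⊢
    constructor
    · have := isPM_conj σ⁻¹ π hπ.1
      simpa using this
    · exact hQP π hπ.1 hπ.2
  · intro π _
    group
  · intro π _
    group

lemma conj_apply (σ π : Equiv.Perm (Fin N)) (x : Fin N) :
    (σ * π * σ⁻¹) x = σ (π (σ.symm x)) := by
  simp [Equiv.Perm.mul_apply, Equiv.Perm.inv_def]

lemma cM_swap (j i i' : Fin N) (hi : i ≠ j) (hi' : i' ≠ j) :
    cM N j i = cM N j i' := by
  by_cases h : i = i'
  · rw [h]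
  · unfold cM
    apply filter_conj_card (Equiv.swap i i')
    · intro π _ hπ
      simp only [Equiv.swap_inv, Equiv.Perm.mul_apply]
      rw [Equiv.swap_apply_of_ne_of_ne (Ne.symm hi) (Ne.symm hi'), hπ, Equiv.swap_apply_left]
    · intro π _ hπ
      simp only [Equiv.swap_inv, Equiv.Perm.mul_apply]
      rw [Equiv.swap_apply_of_ne_of_ne (Ne.symm hi) (Ne.symm hi'), hπ, Equiv.swap_apply_right]

lemma cM_self (j : Fin N) : cM N j j = 0 := by
  unfold cM
  rw [Finset.card_eq_zero, Finset.filter_eq_empty_iff]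
  intro π _
  rintro ⟨hpm, hj⟩
  exact hpm.2 j hj

lemma cM_mul (j i : Fin N) (hi : i ≠ j) : cM N j i * (N - 1) = (MM N).card := by
  have hfib : (MM N).card = ∑ i' : Fin N, cM N j i' := by
    rw [Finset.card_eq_sum_card_fiberwise (f := fun π => π j) (t := univ)
      (fun x _ => mem_univ _)]
    apply Finset.sum_congr rfl
    intro i' _
    unfold MM cM
    rw [Finset.filter_filter]
  have herase : ∑ i' : Fin N, cM N j i' = cM N j j + ∑ i' ∈ univ.erase j, cM N j i' := by
    rw [Finset.add_sum_erase _ _ (mem_univ j)]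
  have hconst : ∑ i' ∈ univ.erase j, cM N j i' = (N - 1) * cM N j i := by
    rw [Finset.sum_congr rfl (fun i' hi' => cM_swap j i' i (Finset.ne_of_mem_erase hi') hi)]
    rw [Finset.sum_const, smul_eq_mul, Finset.card_erase_of_mem (mem_univ j), card_univ,
      Fintype.card_fin]
  rw [hfib, herase, cM_self, hconst]
  ring

lemma c2M_swap (j j' i i1 i2 : Fin N)
    (h1j : i1 ≠ j) (h1j' : i1 ≠ j') (h1i : i1 ≠ i)
    (h2j : i2 ≠ j) (h2j' : i2 ≠ j') (h2i : i2 ≠ i) :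
    c2M N j j' i i1 = c2M N j j' i i2 := by
  by_cases h : i1 = i2
  · rw [h]
  · unfold c2M
    apply filter_conj_card (Equiv.swap i1 i2)
    · rintro π _ ⟨hπ1, hπ2⟩
      simp only [Equiv.swap_inv, Equiv.Perm.mul_apply]
      constructor
      · rw [Equiv.swap_apply_of_ne_of_ne (Ne.symm h1j) (Ne.symm h2j), hπ1,
          Equiv.swap_apply_of_ne_of_ne (Ne.symm h1i) (Ne.symm h2i)]
      · rw [Equiv.swap_apply_of_ne_of_ne (Ne.symm h1j') (Ne.symm h2j'), hπ2,
          Equiv.swap_apply_left]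
    · rintro π _ ⟨hπ1, hπ2⟩
      simp only [Equiv.swap_inv, Equiv.Perm.mul_apply]
      constructor
      · rw [Equiv.swap_apply_of_ne_of_ne (Ne.symm h1j) (Ne.symm h2j), hπ1,
          Equiv.swap_apply_of_ne_of_ne (Ne.symm h1i) (Ne.symm h2i)]
      · rw [Equiv.swap_apply_of_ne_of_ne (Ne.symm h1j') (Ne.symm h2j'), hπ2,
          Equiv.swap_apply_right]

lemma c2M_zero_of_eq_j' (j j' i i' : Fin N) (hij' : i ≠ j')
    (h : Equiv.Perm (Fin N)) : True := trivial

lemma c2M_mul (j j' i i' : Fin N) (hjj' : j ≠ j') (hij : i ≠ j) (hij' : i ≠ j')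
    (hi'j : i' ≠ j) (hi'j' : i' ≠ j') (hii' : i ≠ i') :
    c2M N j j' i i' * ((N - 1) * (N - 3)) = (MM N).card := by
  have hfib : cM N j i = ∑ i'' : Fin N, c2M N j j' i i'' := by
    unfold cM
    rw [Finset.card_eq_sum_card_fiberwise (f := fun π => π j') (t := univ)
      (fun x _ => mem_univ _)]
    apply Finset.sum_congr rfl
    intro i'' _
    unfold c2M
    rw [Finset.filter_filter]
    congr 1
    apply Finset.filter_congr
    intro π _
    simp [and_assoc]
  -- zero fibers
  have hzj : c2M N j j' i j = 0 := by
    unfold c2M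
    rw [Finset.card_eq_zero, Finset.filter_eq_empty_iff]
    rintro π _ ⟨hpm, h1, h2⟩
    have : π (π j') = π j := congrArg π h2
    rw [hpm.1, h1] at this
    exact hij' this.symm
  have hzj' : c2M N j j' i j' = 0 := by
    unfold c2M
    rw [Finset.card_eq_zero, Finset.filter_eq_empty_iff]
    rintro π _ ⟨hpm, h1, h2⟩
    exact hpm.2 j' h2
  have hzi : c2M N j j' i i = 0 := by
    unfold c2M
    rw [Finset.card_eq_zero, Finset.filter_eq_empty_iff]
    rintro π _ ⟨hpm, h1, h2⟩
    rw [← h1] at h2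
    exact hjj' (π.injective h2).symm
  -- split the sum
  have hsplit : ∑ i'' : Fin N, c2M N j j' i i''
      = c2M N j j' i j + (c2M N j j' i j' + (c2M N j j' i i
        + ∑ i'' ∈ ((univ.erase j).erase j').erase i, c2M N j j' i i'')) := by
    rw [← Finset.add_sum_erase _ _ (mem_univ j)]
    congr 1
    rw [← Finset.add_sum_erase _ _ (Finset.mem_erase.mpr ⟨Ne.symm hjj', mem_univ j'⟩)]
    congr 1
    rw [← Finset.add_sum_erase _ _ (Finset.mem_erase.mpr ⟨hij',
      Finset.mem_erase.mpr ⟨hij, mem_univ i⟩⟩)]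
  have hconst : ∑ i'' ∈ ((univ.erase j).erase j').erase i, c2M N j j' i i''
      = (N - 3) * c2M N j j' i i' := by
    rw [Finset.sum_congr rfl (fun x hx => ?_)]
    · rw [Finset.sum_const, smul_eq_mul]
      congr 1
      rw [Finset.card_erase_of_mem (Finset.mem_erase.mpr ⟨hij',
          Finset.mem_erase.mpr ⟨hij, mem_univ i⟩⟩),
        Finset.card_erase_of_mem (Finset.mem_erase.mpr ⟨Ne.symm hjj', mem_univ j'⟩),
        Finset.card_erase_of_mem (mem_univ j), card_univ, Fintype.card_fin]
      omega
    · simp only [Finset.mem_erase] at hx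
      exact c2M_swap j j' i x i' hx.2.2.1 hx.2.1 hx.1 hi'j hi'j' (Ne.symm hii')
  have := cM_mul j i hij
  rw [hfib, hsplit, hzj, hzj', hzi, hconst] at this
  rw [← this]
  ring

lemma c2M_le (j j' i i' : Fin N) (hjj' : j ≠ j') (hij : i ≠ j) (hi'j' : i' ≠ j')
    (hno : ¬(i = j' ∧ i' = j)) :
    c2M N j j' i i' * ((N - 1) * (N - 3)) ≤ (MM N).card := by
  by_cases h1 : i = j'
  · have h2 : i' ≠ j := fun h => hno ⟨h1, h⟩
    have : c2M N j j' i i' = 0 := by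
      unfold c2M
      rw [Finset.card_eq_zero, Finset.filter_eq_empty_iff]
      rintro π _ ⟨hpm, ha, hb⟩
      apply h2
      have hπj : π j = j' := by rw [ha, h1]
      rw [← hb, ← hπj, hpm.1]
    simp [this]
  by_cases h2 : i' = j
  · have : c2M N j j' i i' = 0 := by
      unfold c2M
      rw [Finset.card_eq_zero, Finset.filter_eq_empty_iff]
      rintro π _ ⟨hpm, ha, hb⟩
      apply h1
      have hπj' : π j' = j := by rw [hb, h2]
      have hc := congrArg π hπj'
      rw [hpm.1] at hc
      rw [← ha, ← hc]
    simp [this]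
  by_cases h3 : i = i'
  · have : c2M N j j' i i' = 0 := by
      unfold c2M
      rw [Finset.card_eq_zero, Finset.filter_eq_empty_iff]
      rintro π _ ⟨hpm, ha, hb⟩
      rw [← h3, ← ha] at hb
      exact hjj' (π.injective hb).symm
    simp [this]
  · exact le_of_eq (c2M_mul j j' i i' hjj' hij h1 h2 hi'j' h3)

lemma sum_MM_single (j : Fin N) (h : Fin N → ℝ) :
    ∑ π ∈ MM N, h (π j) = ∑ i : Fin N, (cM N j i : ℝ) * h i := by
  rw [← Finset.sum_fiberwise_of_maps_to (g := fun π : Equiv.Perm (Fin N) => π j)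
    (t := univ) (fun x _ => mem_univ _) (f := fun π => h (π j))]
  apply Finset.sum_congr rfl
  intro i _
  rw [Finset.sum_congr rfl (fun π hπ => by rw [(Finset.mem_filter.mp hπ).2] :
    ∀ π ∈ (MM N).filter (fun π => π j = i), h (π j) = h i)]
  rw [Finset.sum_const, nsmul_eq_mul]
  congr 2
  unfold MM cM
  rw [Finset.filter_filter]

lemma sum_MM_pair (j j' : Fin N) (h2 : Fin N → Fin N → ℝ) :
    ∑ π ∈ MM N, h2 (π j) (π j')
      = ∑ i : Fin N, ∑ i' : Fin N, (c2M N j j' i i' : ℝ) * h2 i i' := by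
  rw [← Finset.sum_fiberwise_of_maps_to (g := fun π : Equiv.Perm (Fin N) => (π j, π j'))
    (t := univ ×ˢ univ) (fun x _ => Finset.mem_product.mpr ⟨mem_univ _, mem_univ _⟩)
    (f := fun π => h2 (π j) (π j'))]
  rw [Finset.sum_product]
  apply Finset.sum_congr rfl
  intro i _
  apply Finset.sum_congr rfl
  intro i' _
  have hcongr : ∀ π ∈ (MM N).filter (fun π => (π j, π j') = (i, i')),
      h2 (π j) (π j') = h2 i i' := by
    intro π hπ
    have := (Finset.mem_filter.mp hπ).2
    rw [Prod.mk.injEq] at this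
    rw [this.1, this.2]
  rw [Finset.sum_congr rfl hcongr, Finset.sum_const, nsmul_eq_mul]
  congr 2
  unfold MM c2M
  rw [Finset.filter_filter]
  congr 1
  apply Finset.filter_congr
  intro π _
  simp [Prod.mk.injEq, and_assoc]

def goodP (κ θ : ℝ) {N : ℕ} (p : Fin N → ℝ) (j i : Fin N) : Prop :=
  i ≠ j ∧ 0 < p i ∧ (1 + κ/3) * p j ≤ p i ∧ p i ≤ θ

noncomputable instance (κ θ : ℝ) {N : ℕ} (p : Fin N → ℝ) (j i : Fin N) :
    Decidable (goodP κ θ p j i) := by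
  unfold goodP; infer_instance

noncomputable def fP (κ θ : ℝ) {N : ℕ} (p : Fin N → ℝ) (j i : Fin N) : ℝ :=
  if goodP κ θ p j i then p i else 0

noncomputable def WP (κ θ : ℝ) {N : ℕ} (p : Fin N → ℝ) (π : Equiv.Perm (Fin N)) : ℝ :=
  ∑ j, fP κ θ p j (π j)

def CondP (κ : ℝ) {N : ℕ} (p : Fin N → ℝ) (π : Equiv.Perm (Fin N)) (i : Fin N) : Prop :=
  p i = 0 ∨ p (π i) = 0 ∨ 2 + κ ^ 2 / 16 ≤ p i / p (π i) + p (π i) / p i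

lemma fP_nonneg (κ θ : ℝ) {N : ℕ} (p : Fin N → ℝ) (hp0 : ∀ i, 0 ≤ p i) (j i : Fin N) :
    0 ≤ fP κ θ p j i := by
  unfold fP; split <;> simp [hp0]

lemma fP_le_p (κ θ : ℝ) {N : ℕ} (p : Fin N → ℝ) (hp0 : ∀ i, 0 ≤ p i) (j i : Fin N) :
    fP κ θ p j i ≤ p i := by
  unfold fP; split <;> simp [hp0]

lemma fP_le_θ (κ θ : ℝ) {N : ℕ} (p : Fin N → ℝ) (hθ : 0 ≤ θ) (j i : Fin N) :
    fP κ θ p j i ≤ θ := by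
  unfold fP; split
  · next h => exact h.2.2.2
  · exact hθ

-- the ratio lemma
lemma ratio_unbalanced (κ a b : ℝ) (hκ : 0 < κ) (hκ1 : κ ≤ 1)
    (ha : 0 < a) (hb : 0 < b) (hab : (1 + κ/3) * a ≤ b) :
    2 + κ ^ 2 / 16 ≤ a / b + b / a := by
  rw [div_add_div _ _ (ne_of_gt hb) (ne_of_gt ha), le_div_iff₀ (mul_pos hb ha)]
  nlinarith [sq_nonneg (b - (1 + κ/3) * a), mul_nonneg (sub_nonneg.mpr hab) ha.le,
    mul_nonneg (mul_nonneg hκ.le (sub_nonneg.mpr hab)) ha.le, sq_nonneg (κ * a),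
    mul_nonneg (mul_nonneg hκ.le hκ.le) (mul_pos ha ha).le,
    mul_nonneg (mul_nonneg (mul_nonneg hκ.le hκ.le) hκ.le) (mul_pos ha ha).le]

-- goodP implies the statement condition
lemma goodP_cond (κ θ : ℝ) {N : ℕ} (p : Fin N → ℝ) (hκ : 0 < κ) (hκ1 : κ ≤ 1)
    (hp0 : ∀ i, 0 ≤ p i) (π : Equiv.Perm (Fin N)) (hpm : IsPerfectMatching π)
    (j : Fin N) (hg : goodP κ θ p j (π j)) : CondP κ p π (π j) := by
  obtain ⟨hne, hpos, hratio, -⟩ := hg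
  unfold CondP
  rw [hpm.1 j]
  by_cases hj : p j = 0
  · right; left; exact hj
  · right; right
    have hpj : 0 < p j := lt_of_le_of_ne (hp0 j) (Ne.symm hj)
    have := ratio_unbalanced κ (p j) (p (π j)) hκ hκ1 hpj hpos hratio
    linarith [this, add_comm (p j / p (π j)) (p (π j) / p j)]

-- antisymmetry
lemma goodP_antisym (κ θ : ℝ) {N : ℕ} (p : Fin N → ℝ) (hκ : 0 < κ)
    (j i : Fin N) (h1 : goodP κ θ p j i) (h2 : goodP κ θ p i j) : False := by
  obtain ⟨-, hpi, hji, -⟩ := h1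
  obtain ⟨-, hpj, hij, -⟩ := h2
  nlinarith [mul_le_mul_of_nonneg_left hij (by positivity : (0:ℝ) ≤ 1 + κ/3)]

noncomputable instance (κ : ℝ) {N : ℕ} (p : Fin N → ℝ) (π : Equiv.Perm (Fin N)) :
    DecidablePred (CondP κ p π) := fun i => by unfold CondP; infer_instance

-- the Cond-filtered set is invariant under π, and the half-sum identity
lemma cond_image (κ : ℝ) {N : ℕ} (p : Fin N → ℝ) (π : Equiv.Perm (Fin N))
    (hpm : IsPerfectMatching π) :
    (univ.filter (CondP κ p π)).image π = univ.filter (CondP κ p π) := by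
  apply Finset.eq_of_subset_of_card_le
  · intro x hx
    obtain ⟨j, hj, rfl⟩ := Finset.mem_image.mp hx
    have hcond := (Finset.mem_filter.mp hj).2
    rw [Finset.mem_filter]
    refine ⟨mem_univ _, ?_⟩
    unfold CondP at hcond ⊢
    rw [hpm.1 j]
    rcases hcond with h | h | h
    · right; left; exact h
    · left; exact h
    · right; right; linarith [h, add_comm (p j / p (π j)) (p (π j) / p j)]
  · rw [Finset.card_image_of_injective _ π.injective]

lemma half_sum_eq (κ : ℝ) {N : ℕ} (p : Fin N → ℝ) (π : Equiv.Perm (Fin N))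
    (hpm : IsPerfectMatching π) :
    (1/2) * ∑ i ∈ univ.filter (CondP κ p π), (p i + p (π i))
      = ∑ i ∈ univ.filter (CondP κ p π), p i := by
  have h2 : ∑ i ∈ univ.filter (CondP κ p π), p (π i)
      = ∑ i ∈ univ.filter (CondP κ p π), p i := by
    conv_rhs => rw [← cond_image κ p π hpm]
    rw [Finset.sum_image (fun x _ y _ h => π.injective h)]
  rw [Finset.sum_add_distrib, h2]
  ring

lemma W_le_S (κ θ : ℝ) {N : ℕ} (p : Fin N → ℝ) (hκ : 0 < κ) (hκ1 : κ ≤ 1)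
    (hp0 : ∀ i, 0 ≤ p i) (π : Equiv.Perm (Fin N)) (hpm : IsPerfectMatching π) :
    WP κ θ p π ≤ ∑ i ∈ univ.filter (CondP κ p π), p i := by
  have hW : WP κ θ p π = ∑ j ∈ univ.filter (fun j => goodP κ θ p j (π j)), p (π j) := by
    unfold WP fP
    rw [Finset.sum_filter]
  have himg : ∑ j ∈ univ.filter (fun j => goodP κ θ p j (π j)), p (π j)
      = ∑ x ∈ (univ.filter (fun j => goodP κ θ p j (π j))).image π, p x :=
    (Finset.sum_image (f := p) (g := ⇑π) (fun x _ y _ h => π.injective h)).symm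
  rw [hW, himg]
  apply Finset.sum_le_sum_of_subset_of_nonneg
  · intro x hx
    obtain ⟨j, hj, rfl⟩ := Finset.mem_image.mp hx
    have hg := (Finset.mem_filter.mp hj).2
    exact Finset.mem_filter.mpr ⟨mem_univ _, goodP_cond κ θ p hκ hκ1 hp0 π hpm j hg⟩
  · intro i _ _
    exact hp0 i

lemma c_real {N : ℕ} (hN1 : 1 ≤ N) (j i : Fin N) (hij : i ≠ j) :
    (cM N j i : ℝ) * ((N:ℝ) - 1) = ((MM N).card : ℝ) := by
  have h := cM_mul (N := N) j i hij
  have h2 : ((cM N j i * (N-1) : ℕ) : ℝ) = ((MM N).card : ℝ) := by exact_mod_cast h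
  push_cast [Nat.cast_sub hN1] at h2
  linarith

lemma c2_real_le {N : ℕ} (hN3 : 3 ≤ N) (j j' i i' : Fin N)
    (hjj' : j ≠ j') (hij : i ≠ j) (hi'j' : i' ≠ j') (hno : ¬(i = j' ∧ i' = j)) :
    (c2M N j j' i i' : ℝ) * (((N:ℝ) - 1) * ((N:ℝ) - 3)) ≤ ((MM N).card : ℝ) := by
  have h := c2M_le (N := N) j j' i i' hjj' hij hi'j' hno
  have h2 : ((c2M N j j' i i' * ((N-1)*(N-3)) : ℕ) : ℝ) ≤ ((MM N).card : ℝ) := by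
    exact_mod_cast h
  have hN1 : 1 ≤ N := by omega
  push_cast [Nat.cast_sub hN1, Nat.cast_sub hN3] at h2
  linarith

lemma sum_W_eq {N : ℕ} (κ θ : ℝ) (p : Fin N → ℝ) (hN1 : 1 ≤ N) :
    (∑ π ∈ MM N, WP κ θ p π) * ((N:ℝ) - 1)
      = ((MM N).card : ℝ) * ∑ j, ∑ i, fP κ θ p j i := by
  have hswap : ∑ π ∈ MM N, WP κ θ p π
      = ∑ j, ∑ i, (cM N j i : ℝ) * fP κ θ p j i := by
    unfold WP
    rw [Finset.sum_comm]
    exact Finset.sum_congr rfl fun j _ => sum_MM_single j (fP κ θ p j)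
  rw [hswap, Finset.sum_mul, Finset.mul_sum]
  apply Finset.sum_congr rfl
  intro j _
  rw [Finset.sum_mul, Finset.mul_sum]
  apply Finset.sum_congr rfl
  intro i _
  by_cases hg : goodP κ θ p j i
  · have : (cM N j i : ℝ) * ((N:ℝ) - 1) = ((MM N).card : ℝ) := c_real hN1 j i hg.1
    calc (cM N j i : ℝ) * fP κ θ p j i * ((N:ℝ)-1)
        = (cM N j i : ℝ) * ((N:ℝ)-1) * fP κ θ p j i := by ring
      _ = ((MM N).card : ℝ) * fP κ θ p j i := by rw [this]
  · have : fP κ θ p j i = 0 := by unfold fP; exact if_neg hg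
    rw [this]; ring

lemma sum_W_sq_le {N : ℕ} (κ θ : ℝ) (p : Fin N → ℝ) (hN3 : 3 ≤ N) (hκ : 0 < κ)
    (hθ : 0 ≤ θ) (hp0 : ∀ i, 0 ≤ p i) :
    (∑ π ∈ MM N, (WP κ θ p π)^2) * (((N:ℝ) - 1) * ((N:ℝ) - 3))
      ≤ ((MM N).card : ℝ) * (θ * (∑ j, ∑ i, fP κ θ p j i) * ((N:ℝ) - 3)
          + (∑ j, ∑ i, fP κ θ p j i)^2) := by
  set n : ℝ := (N : ℝ) with hn
  set M : ℝ := ((MM N).card : ℝ) with hM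
  set r : Fin N → ℝ := fun j => ∑ i, fP κ θ p j i with hr
  have hN1 : 1 ≤ N := by omega
  have hn3 : (0:ℝ) ≤ n - 3 := by
    have h3 : (3:ℝ) ≤ n := by rw [hn]; exact_mod_cast hN3
    linarith
  have hM0 : 0 ≤ M := Nat.cast_nonneg _
  have hr0 : ∀ j, 0 ≤ r j := fun j => Finset.sum_nonneg fun i _ => fP_nonneg κ θ p hp0 j i
  have hR0 : 0 ≤ ∑ j, r j := Finset.sum_nonneg fun j _ => hr0 j
  -- expand the square
  have hswap : ∑ π ∈ MM N, (WP κ θ p π)^2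
      = ∑ j, ∑ j', ∑ π ∈ MM N, fP κ θ p j (π j) * fP κ θ p j' (π j') := by
    have h1 : ∀ π : Equiv.Perm (Fin N), (WP κ θ p π)^2
        = ∑ j, ∑ j', fP κ θ p j (π j) * fP κ θ p j' (π j') := by
      intro π
      unfold WP
      rw [sq, Finset.sum_mul_sum]
    rw [Finset.sum_congr rfl fun π _ => h1 π, Finset.sum_comm]
    exact Finset.sum_congr rfl fun j _ => Finset.sum_comm
  -- diagonal bound
  have hdiag : ∀ j, (∑ π ∈ MM N, fP κ θ p j (π j) * fP κ θ p j (π j)) * ((n-1)*(n-3))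
      ≤ M * (θ * r j) * (n-3) := by
    intro j
    rw [sum_MM_single j (fun i => fP κ θ p j i * fP κ θ p j i)]
    have hstep : (∑ i, (cM N j i : ℝ) * (fP κ θ p j i * fP κ θ p j i)) * (n-1)
        ≤ M * (θ * r j) := by
      rw [Finset.sum_mul, hr, Finset.mul_sum, Finset.mul_sum]
      apply Finset.sum_le_sum
      intro i _
      by_cases hg : goodP κ θ p j i
      · have hc : (cM N j i : ℝ) * (n - 1) = M := c_real hN1 j i hg.1
        have hff : fP κ θ p j i * fP κ θ p j i ≤ θ * fP κ θ p j i :=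
          mul_le_mul_of_nonneg_right (fP_le_θ κ θ p hθ j i) (fP_nonneg κ θ p hp0 j i)
        calc (cM N j i : ℝ) * (fP κ θ p j i * fP κ θ p j i) * (n-1)
            = ((cM N j i : ℝ) * (n-1)) * (fP κ θ p j i * fP κ θ p j i) := by ring
          _ = M * (fP κ θ p j i * fP κ θ p j i) := by rw [hc]
          _ ≤ M * (θ * fP κ θ p j i) := mul_le_mul_of_nonneg_left hff hM0
          _ = M * (θ * fP κ θ p j i) := rfl
      · have : fP κ θ p j i = 0 := by unfold fP; exact if_neg hg
        rw [this]
        simp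
    calc (∑ i, (cM N j i : ℝ) * (fP κ θ p j i * fP κ θ p j i)) * ((n-1)*(n-3))
        = ((∑ i, (cM N j i : ℝ) * (fP κ θ p j i * fP κ θ p j i)) * (n-1)) * (n-3) := by
          ring
      _ ≤ (M * (θ * r j)) * (n-3) := by
          apply mul_le_mul_of_nonneg_right hstep hn3
  -- off-diagonal bound
  have hoff : ∀ j j', j' ≠ j →
      (∑ π ∈ MM N, fP κ θ p j (π j) * fP κ θ p j' (π j')) * ((n-1)*(n-3))
      ≤ M * (r j * r j') := by
    intro j j' hjj'
    rw [sum_MM_pair j j' (fun i i' => fP κ θ p j i * fP κ θ p j' i')]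
    have hfin : M * (r j * r j') = ∑ i, ∑ i', M * (fP κ θ p j i * fP κ θ p j' i') := by
      rw [hr]
      rw [Finset.sum_mul_sum]
      rw [Finset.mul_sum]
      apply Finset.sum_congr rfl
      intro i _
      rw [Finset.mul_sum]
    rw [hfin, Finset.sum_mul]
    apply Finset.sum_le_sum
    intro i _
    rw [Finset.sum_mul]
    apply Finset.sum_le_sum
    intro i' _
    by_cases hg1 : goodP κ θ p j i
    · by_cases hg2 : goodP κ θ p j' i'
      · have hno : ¬(i = j' ∧ i' = j) := by
          rintro ⟨h1, h2⟩
          subst h1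
          subst h2
          exact goodP_antisym κ θ p hκ _ _ hg1 hg2
        have hc2 : (c2M N j j' i i' : ℝ) * ((n-1)*(n-3)) ≤ M :=
          c2_real_le hN3 j j' i i' (Ne.symm hjj') hg1.1 hg2.1 hno
        have hff : 0 ≤ fP κ θ p j i * fP κ θ p j' i' :=
          mul_nonneg (fP_nonneg κ θ p hp0 j i) (fP_nonneg κ θ p hp0 j' i')
        calc (c2M N j j' i i' : ℝ) * (fP κ θ p j i * fP κ θ p j' i') * ((n-1)*(n-3))
            = ((c2M N j j' i i' : ℝ) * ((n-1)*(n-3))) * (fP κ θ p j i * fP κ θ p j' i') := by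
              ring
          _ ≤ M * (fP κ θ p j i * fP κ θ p j' i') := mul_le_mul_of_nonneg_right hc2 hff
      · have : fP κ θ p j' i' = 0 := by unfold fP; exact if_neg hg2
        rw [this]; simp
    · have : fP κ θ p j i = 0 := by unfold fP; exact if_neg hg1
      rw [this]; simp
  -- assemble
  rw [hswap, Finset.sum_mul]
  have hsplit : ∀ j, (∑ j', ∑ π ∈ MM N, fP κ θ p j (π j) * fP κ θ p j' (π j')) * ((n-1)*(n-3))
      ≤ M * (θ * r j) * (n-3) + M * (r j * (∑ j', r j')) := by
    intro j
    have : ∑ j' : Fin N, ∑ π ∈ MM N, fP κ θ p j (π j) * fP κ θ p j' (π j')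
        = (∑ π ∈ MM N, fP κ θ p j (π j) * fP κ θ p j (π j))
          + ∑ j' ∈ univ.erase j, ∑ π ∈ MM N, fP κ θ p j (π j) * fP κ θ p j' (π j') :=
      (Finset.add_sum_erase _ _ (mem_univ j)).symm
    rw [this, add_mul]
    apply add_le_add (hdiag j)
    calc (∑ j' ∈ univ.erase j, ∑ π ∈ MM N, fP κ θ p j (π j) * fP κ θ p j' (π j')) * ((n-1)*(n-3))
        = ∑ j' ∈ univ.erase j, (∑ π ∈ MM N, fP κ θ p j (π j) * fP κ θ p j' (π j')) * ((n-1)*(n-3)) := by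
          rw [Finset.sum_mul]
      _ ≤ ∑ j' ∈ univ.erase j, M * (r j * r j') := by
          apply Finset.sum_le_sum
          intro j' hj'
          exact hoff j j' (Finset.ne_of_mem_erase hj')
      _ ≤ ∑ j' : Fin N, M * (r j * r j') := by
          apply Finset.sum_le_sum_of_subset_of_nonneg (Finset.subset_univ _)
          intro j' _ _
          exact mul_nonneg hM0 (mul_nonneg (hr0 j) (hr0 j'))
      _ = M * (r j * ∑ j', r j') := by
          simp only [Finset.mul_sum]
  calc ∑ j, (∑ j', ∑ π ∈ MM N, fP κ θ p j (π j) * fP κ θ p j' (π j')) * ((n-1)*(n-3))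
      ≤ ∑ j, (M * (θ * r j) * (n-3) + M * (r j * (∑ j', r j'))) :=
        Finset.sum_le_sum fun j _ => hsplit j
    _ = ∑ j, ((M * θ * (n-3) + M * (∑ j', r j')) * r j) :=
        Finset.sum_congr rfl fun j _ => by ring
    _ = (M * θ * (n-3) + M * (∑ j', r j')) * ∑ j, r j := by
        rw [← Finset.mul_sum]
    _ = M * (θ * (∑ j, r j) * (n-3) + (∑ j, r j)^2) := by ring

lemma R_lower {N : ℕ} (κ θ : ℝ) (p : Fin N → ℝ) (hκ : 0 < κ) (hθ : 0 ≤ θ)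
    (hp0 : ∀ i, 0 ≤ p i) (hp1 : ∑ i, p i = 1) (hN0 : 0 < N)
    (hTV : κ ≤ (1/2) * ∑ i, |p i - 1/(N:ℝ)|) :
    (2*κ/3 - (∑ i ∈ univ.filter (fun i => θ < p i), p i)) * (N:ℝ)
      ≤ ∑ j, ∑ i, fP κ θ p j i := by
  set n : ℝ := (N : ℝ) with hn
  have hn0 : (0:ℝ) < n := by rw [hn]; exact_mod_cast hN0
  set g : ℝ := ∑ i ∈ univ.filter (fun i => θ < p i), p i with hg
  have hg0 : 0 ≤ g := Finset.sum_nonneg fun i _ => hp0 i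
  -- κ ≤ ∑ max (1/n - p i) 0
  have habs : ∀ i, |p i - 1/n| = (p i - 1/n) + 2 * max (1/n - p i) 0 := by
    intro i
    rcases le_total (1/n) (p i) with h | h
    · rw [abs_of_nonneg (by linarith), max_eq_right (by linarith)]
      ring
    · rw [abs_of_nonpos (by linarith), max_eq_left (by linarith)]
      ring
  have hsum0 : ∑ i, (p i - 1/n) = 0 := by
    rw [Finset.sum_sub_distrib, hp1, Finset.sum_const, card_univ, Fintype.card_fin]
    rw [nsmul_eq_mul, ← hn]; field_simp; norm_num
  have hmax : κ ≤ ∑ i, max (1/n - p i) 0 := by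
    have h1 : ∑ i, |p i - 1/n| = ∑ i, ((p i - 1/n) + 2 * max (1/n - p i) 0) :=
      Finset.sum_congr rfl fun i _ => habs i
    rw [Finset.sum_add_distrib, hsum0, ← Finset.mul_sum] at h1
    rw [h1] at hTV
    linarith
  have hmaxN : κ * n ≤ ∑ j, max (1 - n * p j) 0 := by
    have h2 : ∀ j, n * max (1/n - p j) 0 = max (1 - n * p j) 0 := by
      intro j
      rcases le_total (p j) (1/n) with h | h
      · rw [max_eq_left (by linarith), max_eq_left]
        · field_simp
        · have : n * p j ≤ n * (1/n) := mul_le_mul_of_nonneg_left h hn0.le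
          rw [mul_one_div_cancel (ne_of_gt hn0)] at this
          linarith
      · rw [max_eq_right (by linarith), max_eq_right]
        · ring
        · have : n * (1/n) ≤ n * p j := mul_le_mul_of_nonneg_left h hn0.le
          rw [mul_one_div_cancel (ne_of_gt hn0)] at this
          linarith
    calc κ * n = n * κ := by ring
      _ ≤ n * ∑ i, max (1/n - p i) 0 := mul_le_mul_of_nonneg_left hmax hn0.le
      _ = ∑ j, n * max (1/n - p j) 0 := by rw [Finset.mul_sum]
      _ = ∑ j, max (1 - n * p j) 0 := Finset.sum_congr rfl fun j _ => h2 j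
  -- pointwise bound
  have hper : ∀ j, max (1 - n * p j) 0 ≤ (∑ i, fP κ θ p j i) + g + (κ/3) * (n * p j) := by
    intro j
    have hrj0 : 0 ≤ ∑ i, fP κ θ p j i := Finset.sum_nonneg fun i _ => fP_nonneg κ θ p hp0 j i
    apply max_le
    · have hid : 1 - n * p j = ∑ i, (p i - p j) := by
        rw [Finset.sum_sub_distrib, hp1, Finset.sum_const, card_univ, Fintype.card_fin]
        rw [hn]
        ring
      rw [hid]
      have hles : ∑ i, (p i - p j) ≤ ∑ i, (fP κ θ p j i + (if θ < p i then p i else 0)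
          + (κ/3) * p j) := by
        apply Finset.sum_le_sum
        intro i _
        have hf0 : 0 ≤ fP κ θ p j i := fP_nonneg κ θ p hp0 j i
        have hκp : 0 ≤ (κ/3) * p j := mul_nonneg (by linarith) (hp0 j)
        by_cases hθi : θ < p i
        · rw [if_pos hθi]
          linarith [hp0 j]
        · rw [if_neg hθi]
          by_cases hgood : goodP κ θ p j i
          · have : fP κ θ p j i = p i := if_pos hgood
            rw [this]
            linarith [hp0 j]
          · unfold goodP at hgood
            push_neg at hgood
            by_cases hij : i = j
            · subst hij
              linarith
            · by_cases hpi : 0 < p i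
              · have hrat : p i < (1 + κ/3) * p j := by
                  by_contra hcon
                  push_neg at hcon
                  exact absurd (hgood hij hpi hcon) hθi
                nlinarith [hp0 j]
              · have : p i = 0 := le_antisymm (not_lt.mp hpi) (hp0 i)
                rw [this]
                linarith [hp0 j]
      calc ∑ i, (p i - p j) ≤ _ := hles
        _ = (∑ i, fP κ θ p j i) + g + (κ/3) * (n * p j) := by
          rw [Finset.sum_add_distrib, Finset.sum_add_distrib, Finset.sum_const, card_univ,
            Fintype.card_fin, ← Finset.sum_filter]
          rw [hn, hg]
          push_cast
          ring
    · have hx : 0 ≤ (κ/3) * (n * p j) := mul_nonneg (by linarith) (mul_nonneg hn0.le (hp0 j))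
      linarith [hrj0, hg0]
  -- sum up
  have htot : κ * n ≤ (∑ j, ∑ i, fP κ θ p j i) + n * g + (κ/3) * n := by
    calc κ * n ≤ ∑ j, max (1 - n * p j) 0 := hmaxN
      _ ≤ ∑ j, ((∑ i, fP κ θ p j i) + g + (κ/3) * (n * p j)) :=
        Finset.sum_le_sum fun j _ => hper j
      _ = (∑ j, ∑ i, fP κ θ p j i) + n * g + (κ/3) * n := by
        rw [Finset.sum_add_distrib, Finset.sum_add_distrib, Finset.sum_const, card_univ,
          Fintype.card_fin, ← Finset.mul_sum, ← Finset.mul_sum, hp1]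
        rw [hn]
        push_cast
        ring
  nlinarith [htot]

end Ume

open Ume in
set_option maxHeartbeats 4000000 in
/-- for every κ > 0 and all sufficiently large even N, if (p_1,…,p_N) is a
probability distribution with (1/2)∑|p_i − 1/N| ≥ κ, then for at least a 1/3 fraction of
perfect matchings M of [N], the edges (i,j) ∈ M with p_i/p_j + p_j/p_i ≥ 2 + κ²/16
(stipulated to hold when p_i = 0 or p_j = 0) carry total weight ∑ (p_i + p_j) ≥ κ/12.
(Each edge {i, π i} is counted twice in the sum over i, whence the factor 1/2.) -/
theorem unbalanced_edges_distribution (κ : ℝ) (hκ : 0 < κ) :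
    ∃ N₀ : ℕ, ∀ N : ℕ, N₀ ≤ N → Even N →
      ∀ p : Fin N → ℝ, (∀ i, 0 ≤ p i) → (∑ i, p i = 1) →
        κ ≤ (1 / 2) * ∑ i, |p i - 1 / N| →
        ((univ.filter (fun π : Equiv.Perm (Fin N) => IsPerfectMatching π)).card : ℝ) ≤
          3 * ((univ.filter (fun π : Equiv.Perm (Fin N) => IsPerfectMatching π ∧
            κ / 12 ≤ (1 / 2) * ∑ i ∈ univ.filter (fun i =>
                p i = 0 ∨ p (π i) = 0 ∨
                  2 + κ ^ 2 / 16 ≤ p i / p (π i) + p (π i) / p i),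
              (p i + p (π i)))).card) := by
  refine ⟨⌈(100000:ℝ)/κ^4⌉₊ + 10, ?_⟩
  intro N hN _hEven p hp0 hp1 hTV
  have hκ4 : (0:ℝ) < κ^4 := by positivity
  set n : ℝ := (N:ℝ) with hn
  have hnbig : 100000/κ^4 + 10 ≤ n := by
    have h1 : ((100000:ℝ)/κ^4) ≤ (⌈(100000:ℝ)/κ^4⌉₊ : ℝ) := Nat.le_ceil _
    have h2 : ((⌈(100000:ℝ)/κ^4⌉₊ + 10 : ℕ) : ℝ) ≤ n := by rw [hn]; exact_mod_cast hN
    push_cast at h2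
    linarith
  have hn0 : (0:ℝ) < n := by
    have : (0:ℝ) < 100000/κ^4 := by positivity
    linarith
  have hN0 : 0 < N := by rw [hn] at hn0; exact_mod_cast hn0
  have hκ1 : κ ≤ 1 := by
    have h3 : ∑ i, |p i - 1/n| ≤ ∑ i, (p i + 1/n) := by
      apply Finset.sum_le_sum
      intro i _
      have h1n : (0:ℝ) ≤ 1/n := by positivity
      rw [abs_le]
      constructor <;> [linarith [hp0 i]; linarith [hp0 i]]
    have h4 : ∑ i, (p i + 1/n) = 2 := by
      rw [Finset.sum_add_distrib, hp1, Finset.sum_const, card_univ, Fintype.card_fin]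
      rw [hn]
      field_simp
      rw [nsmul_eq_mul, mul_one_div_cancel (by exact_mod_cast hN0.ne' : (N:ℝ) ≠ 0)]; norm_num
    rw [h4] at h3
    linarith [hTV, h3]
  have hκ41 : κ^4 ≤ 1 := by
    have h2 : κ^2 ≤ 1 := by nlinarith
    nlinarith
  have hn10 : (100010:ℝ) ≤ n := by
    have : (100000:ℝ) ≤ 100000/κ^4 := by
      rw [le_div_iff₀ hκ4]
      nlinarith
    linarith
  have hN10 : 100010 ≤ N := by
    rw [hn] at hn10
    exact_mod_cast hn10
  have hN1 : 1 ≤ N := by omega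
  have hN3 : 3 ≤ N := by omega
  have hn1 : (0:ℝ) < n - 1 := by linarith
  have hn3 : (0:ℝ) < n - 3 := by linarith
  set θ : ℝ := κ^2/100 with hθdef
  have hθ0 : (0:ℝ) < θ := by positivity
  set M : ℝ := ((univ.filter (fun π : Equiv.Perm (Fin N) => IsPerfectMatching π)).card : ℝ)
    with hM
  have hMMcard : ((MM N).card : ℝ) = M := rfl
  have hM0 : (0:ℝ) ≤ M := by rw [← hMMcard]; positivity
  set R : ℝ := ∑ j, ∑ i, fP κ θ p j i with hR
  have hR0 : (0:ℝ) ≤ R :=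
    Finset.sum_nonneg fun j _ => Finset.sum_nonneg fun i _ => fP_nonneg κ θ p hp0 j i
  set g : ℝ := ∑ i ∈ univ.filter (fun i => θ < p i), p i with hgdef
  have hg0 : (0:ℝ) ≤ g := Finset.sum_nonneg fun i _ => hp0 i
  have hsumle1 : ∀ s : Finset (Fin N), ∑ i ∈ s, p i ≤ 1 := by
    intro s
    rw [← hp1]
    exact Finset.sum_le_sum_of_subset_of_nonneg (Finset.subset_univ _) fun i _ _ => hp0 i
  by_cases hgc : g ≤ κ/4
  · -- Case 2: small giant mass, Chebyshev
    have hRlow' := R_lower κ θ p hκ hθ0.le hp0 hp1 hN0 hTV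
    rw [← hgdef, ← hR, ← hn] at hRlow'
    have hRlow : 5*κ/12 * n ≤ R := by nlinarith
    have hRup : R ≤ n := by
      have h1 : ∀ j : Fin N, ∑ i, fP κ θ p j i ≤ 1 := by
        intro j
        calc ∑ i, fP κ θ p j i ≤ ∑ i, p i :=
              Finset.sum_le_sum fun i _ => fP_le_p κ θ p hp0 j i
          _ = 1 := hp1
      calc R ≤ ∑ _j : Fin N, (1:ℝ) := Finset.sum_le_sum fun j _ => h1 j
        _ = n := by rw [Finset.sum_const, card_univ, Fintype.card_fin, hn]; simp
    set μ : ℝ := R / (n-1) with hμdef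
    have hμn1 : μ * (n-1) = R := div_mul_cancel₀ _ (ne_of_gt hn1)
    have hμ0 : 0 ≤ μ := div_nonneg hR0 hn1.le
    have hμlow : 5*κ/12 ≤ μ := by
      rw [hμdef, le_div_iff₀ hn1]
      nlinarith
    have hμup : μ ≤ 2 := by
      rw [hμdef, div_le_iff₀ hn1]
      linarith
    have hsumWeq := sum_W_eq κ θ p hN1
    rw [← hn, ← hR, hMMcard] at hsumWeq
    have hsumW : ∑ π ∈ MM N, WP κ θ p π = M * μ := by
      apply mul_right_cancel₀ (ne_of_gt hn1)
      rw [hsumWeq, ← hμn1]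
      ring
    have hsumW2 := sum_W_sq_le κ θ p hN3 hκ hθ0.le hp0
    rw [← hn, ← hR, hMMcard] at hsumW2
    have hvar : ∑ π ∈ MM N, (WP κ θ p π - μ)^2 ≤ M * (θ*μ + 2*μ^2/(n-3)) := by
      have hexp : ∑ π ∈ MM N, (WP κ θ p π - μ)^2
          = (∑ π ∈ MM N, (WP κ θ p π)^2) - M*μ^2 := by
        have h1 : ∀ π, (WP κ θ p π - μ)^2 = (WP κ θ p π)^2 - 2*μ*(WP κ θ p π) + μ^2 :=
          fun π => by ring
        rw [Finset.sum_congr rfl fun π _ => h1 π]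
        rw [Finset.sum_add_distrib, Finset.sum_sub_distrib, ← Finset.mul_sum, hsumW,
          Finset.sum_const, nsmul_eq_mul, hMMcard]
        ring
      rw [hexp]
      have hident : (M*(θ*μ + 2*μ^2/(n-3)) + M*μ^2)*((n-1)*(n-3)) = M*(θ*R*(n-3) + R^2) := by
        rw [← hμn1]
        field_simp
        ring
      have h2 : (∑ π ∈ MM N, (WP κ θ p π)^2) ≤ M*(θ*μ + 2*μ^2/(n-3)) + M*μ^2 := by
        have h3 := hsumW2
        rw [← hident] at h3
        exact le_of_mul_le_mul_right h3 (by positivity)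
      linarith
    set Bad := (MM N).filter (fun π => WP κ θ p π < κ/12) with hBad
    have hBadcard : (Bad.card:ℝ) * (κ/3)^2 ≤ M * (θ*μ + 2*μ^2/(n-3)) := by
      calc (Bad.card:ℝ)*(κ/3)^2 = ∑ _π ∈ Bad, (κ/3)^2 := by
            rw [Finset.sum_const, nsmul_eq_mul]
        _ ≤ ∑ π ∈ Bad, (WP κ θ p π - μ)^2 := by
            apply Finset.sum_le_sum
            intro π hπ
            have hw := (Finset.mem_filter.mp hπ).2
            have hd : κ/3 ≤ μ - WP κ θ p π := by linarith
            calc (κ/3)^2 ≤ (μ - WP κ θ p π)^2 := by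
                  apply pow_le_pow_left₀ (by linarith) hd
              _ = (WP κ θ p π - μ)^2 := by ring
        _ ≤ ∑ π ∈ MM N, (WP κ θ p π - μ)^2 :=
            Finset.sum_le_sum_of_subset_of_nonneg (Finset.filter_subset _ _)
              fun _ _ _ => sq_nonneg _
        _ ≤ M * (θ*μ + 2*μ^2/(n-3)) := hvar
    have hnum : θ*μ + 2*μ^2/(n-3) ≤ (2/3)*(κ/3)^2 := by
      have h1 : θ*μ ≤ κ^2/50 := by
        calc θ*μ ≤ θ*2 := mul_le_mul_of_nonneg_left hμup hθ0.le
          _ = κ^2/50 := by rw [hθdef]; ring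
      have hκ2 : (0:ℝ) < κ^2 := by positivity
      have hden : 800/κ^2 ≤ n - 3 := by
        have e1 : (100000:ℝ)/κ^2 ≤ 100000/κ^4 := by
          rw [div_le_div_iff₀ hκ2 hκ4]
          nlinarith
        have e2 : (800:ℝ)/κ^2 ≤ 100000/κ^2 := by
          gcongr <;> norm_num
        linarith
      have h2 : 2*μ^2/(n-3) ≤ κ^2/100 := by
        rw [div_le_iff₀ hn3]
        have e3 : κ^2/100*(800/κ^2) ≤ κ^2/100*(n-3) :=
          mul_le_mul_of_nonneg_left hden (by positivity)
        have e4 : κ^2/100*(800/κ^2) = 8 := by field_simp; ring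
        nlinarith
      nlinarith [sq_nonneg κ]
    have hsplit := Finset.card_filter_add_card_filter_not
      (s := MM N) (p := fun π => WP κ θ p π < κ/12)
    set Gd := (MM N).filter (fun π => ¬ WP κ θ p π < κ/12) with hGd
    have hBadle : (Bad.card:ℝ) ≤ (2/3)*M := by
      have h4 : M * (θ*μ + 2*μ^2/(n-3)) ≤ M * ((2/3)*(κ/3)^2) :=
        mul_le_mul_of_nonneg_left hnum hM0
      have h5 : (Bad.card:ℝ) * (κ/3)^2 ≤ ((2/3)*M) * (κ/3)^2 := by nlinarith
      exact le_of_mul_le_mul_right h5 (by positivity)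
    have hGdsub : ∀ π ∈ Gd, π ∈ univ.filter (fun π : Equiv.Perm (Fin N) =>
        IsPerfectMatching π ∧ κ / 12 ≤ (1 / 2) * ∑ i ∈ univ.filter (fun i =>
          p i = 0 ∨ p (π i) = 0 ∨
            2 + κ ^ 2 / 16 ≤ p i / p (π i) + p (π i) / p i), (p i + p (π i))) := by
      intro π hπ
      rw [hGd] at hπ
      obtain ⟨hm, hw⟩ := Finset.mem_filter.mp hπ
      have hpm : IsPerfectMatching π := (Finset.mem_filter.mp hm).2
      have hineq : κ/12 ≤ ∑ i ∈ univ.filter (CondP κ p π), p i :=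
        le_trans (not_lt.mp hw) (W_le_S κ θ p hκ hκ1 hp0 π hpm)
      rw [← half_sum_eq κ p π hpm] at hineq
      exact Finset.mem_filter.mpr ⟨mem_univ _, hpm, hineq⟩
    have hcast : M = (Bad.card:ℝ) + (Gd.card:ℝ) := by
      rw [← hMMcard]
      exact_mod_cast hsplit.symm
    have hGoalcard : (Gd.card:ℝ) ≤ (((univ.filter (fun π : Equiv.Perm (Fin N) =>
        IsPerfectMatching π ∧ κ / 12 ≤ (1 / 2) * ∑ i ∈ univ.filter (fun i =>
          p i = 0 ∨ p (π i) = 0 ∨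
            2 + κ ^ 2 / 16 ≤ p i / p (π i) + p (π i) / p i), (p i + p (π i)))).card : ℕ) : ℝ) := by
      exact_mod_cast Finset.card_le_card (fun π hπ => hGdsub π hπ)
    linarith
  · -- Case 1: big giant mass
    push_neg at hgc
    set Γ := univ.filter (fun i => θ < p i) with hΓdef
    set Γ3 := univ.filter (fun i => θ/3 < p i) with hΓ3def
    have hΓcard : (Γ.card:ℝ) * θ ≤ 1 := by
      have h1 : Γ.card • θ ≤ ∑ i ∈ Γ, p i :=
        Finset.card_nsmul_le_sum Γ p θ (fun i hi => le_of_lt (Finset.mem_filter.mp hi).2)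
      rw [nsmul_eq_mul] at h1
      exact le_trans h1 (hsumle1 Γ)
    have hΓ3card : (Γ3.card:ℝ) * (θ/3) ≤ 1 := by
      have h1 : Γ3.card • (θ/3) ≤ ∑ i ∈ Γ3, p i :=
        Finset.card_nsmul_le_sum Γ3 p (θ/3) (fun i hi => le_of_lt (Finset.mem_filter.mp hi).2)
      rw [nsmul_eq_mul] at h1
      exact le_trans h1 (hsumle1 Γ3)
    have hperfilter : ∀ i ∈ Γ, ((MM N).filter (fun π => ¬ CondP κ p π i)).card
        ≤ ∑ i' ∈ Γ3.erase i, cM N i i' := by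
      intro i hiΓ
      have hsub : (MM N).filter (fun π => ¬ CondP κ p π i) ⊆
          (Γ3.erase i).biUnion (fun i' => univ.filter
            (fun π : Equiv.Perm (Fin N) => IsPerfectMatching π ∧ π i = i')) := by
        intro π hπ
        obtain ⟨hm, hnc⟩ := Finset.mem_filter.mp hπ
        have hpm : IsPerfectMatching π := (Finset.mem_filter.mp hm).2
        unfold CondP at hnc
        push_neg at hnc
        obtain ⟨hpi0, hpπ0, hlt⟩ := hnc
        have hpθ : θ < p i := (Finset.mem_filter.mp hiΓ).2
        have hpπ : 0 < p (π i) := lt_of_le_of_ne (hp0 _) (Ne.symm hpπ0)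
        have hθ3 : θ/3 < p (π i) := by
          by_contra hcon
          push_neg at hcon
          have h3 : 3 * p (π i) < p i := by linarith
          have hdiv : (3:ℝ) < p i / p (π i) := by
            rw [lt_div_iff₀ hpπ]
            linarith
          have hnn : (0:ℝ) ≤ p (π i) / p i := div_nonneg (hp0 _) (hp0 _)
          have hκ2 : κ^2 ≤ 1 := by nlinarith
          linarith
        apply Finset.mem_biUnion.mpr
        exact ⟨π i, Finset.mem_erase.mpr ⟨hpm.2 i, Finset.mem_filter.mpr ⟨mem_univ _, hθ3⟩⟩,
          Finset.mem_filter.mpr ⟨mem_univ _, hpm, rfl⟩⟩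
      calc ((MM N).filter (fun π => ¬ CondP κ p π i)).card
          ≤ ((Γ3.erase i).biUnion (fun i' => univ.filter
            (fun π : Equiv.Perm (Fin N) => IsPerfectMatching π ∧ π i = i'))).card :=
            Finset.card_le_card hsub
        _ ≤ ∑ i' ∈ Γ3.erase i, (univ.filter
            (fun π : Equiv.Perm (Fin N) => IsPerfectMatching π ∧ π i = i')).card :=
            Finset.card_biUnion_le
        _ = ∑ i' ∈ Γ3.erase i, cM N i i' := rfl
    have hcMreal : ∀ (i i' : Fin N), i' ≠ i → (cM N i i' : ℝ) ≤ M/(n-1) := by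
      intro i i' hne
      have h := c_real (N := N) hN1 i i' hne
      rw [← hn, hMMcard] at h
      exact le_of_eq ((eq_div_iff (ne_of_gt hn1)).mpr h)
    have hsplit := Finset.card_filter_add_card_filter_not
      (s := MM N) (p := fun π => ∀ i ∈ Γ, CondP κ p π i)
    set G1 := (MM N).filter (fun π => ∀ i ∈ Γ, CondP κ p π i) with hG1def
    set B1 := (MM N).filter (fun π => ¬ ∀ i ∈ Γ, CondP κ p π i) with hB1def
    have hB1real : (B1.card:ℝ) ≤ (Γ.card:ℝ) * ((Γ3.card:ℝ) * (M/(n-1))) := by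
      have hsubB : B1 ⊆ Γ.biUnion (fun i => (MM N).filter (fun π => ¬ CondP κ p π i)) := by
        intro π hπ
        rw [hB1def] at hπ
        obtain ⟨hm, hnall⟩ := Finset.mem_filter.mp hπ
        push_neg at hnall
        obtain ⟨i, hi, hnc⟩ := hnall
        exact Finset.mem_biUnion.mpr ⟨i, hi, Finset.mem_filter.mpr ⟨hm, hnc⟩⟩
      have h1 : B1.card ≤ ∑ i ∈ Γ, ((MM N).filter (fun π => ¬ CondP κ p π i)).card :=
        le_trans (Finset.card_le_card hsubB) Finset.card_biUnion_le
      have h1' : B1.card ≤ ∑ i ∈ Γ, ∑ i' ∈ Γ3.erase i, cM N i i' :=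
        le_trans h1 (Finset.sum_le_sum hperfilter)
      have h2 : (B1.card:ℝ) ≤ ∑ i ∈ Γ, ∑ i' ∈ Γ3.erase i, (cM N i i' : ℝ) := by
        exact_mod_cast h1'
      have h3 : ∑ i ∈ Γ, ∑ i' ∈ Γ3.erase i, (cM N i i' : ℝ)
          ≤ ∑ _i ∈ Γ, ((Γ3.card:ℝ) * (M/(n-1))) := by
        apply Finset.sum_le_sum
        intro i _
        calc ∑ i' ∈ Γ3.erase i, (cM N i i':ℝ) ≤ ∑ _i' ∈ Γ3.erase i, M/(n-1) :=
              Finset.sum_le_sum (fun i' hi' => hcMreal i i' (Finset.ne_of_mem_erase hi'))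
          _ = ((Γ3.erase i).card : ℝ) * (M/(n-1)) := by
              rw [Finset.sum_const, nsmul_eq_mul]
          _ ≤ (Γ3.card:ℝ) * (M/(n-1)) := by
              apply mul_le_mul_of_nonneg_right _ (div_nonneg hM0 hn1.le)
              exact_mod_cast Finset.card_le_card (Finset.erase_subset _ _)
      have h4 : ∑ _i ∈ Γ, ((Γ3.card:ℝ) * (M/(n-1)))
          = (Γ.card:ℝ) * ((Γ3.card:ℝ) * (M/(n-1))) := by
        rw [Finset.sum_const, nsmul_eq_mul]
      linarith
    have hB1le : (B1.card:ℝ) ≤ (2/3)*M := by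
      have ha : (Γ.card:ℝ) ≤ 1/θ := by
        rw [le_div_iff₀ hθ0]
        exact hΓcard
      have hb : (Γ3.card:ℝ) ≤ 3/θ := by
        rw [le_div_iff₀ hθ0]
        nlinarith
      have hprod : (Γ.card:ℝ)*(Γ3.card:ℝ) ≤ (1/θ)*(3/θ) :=
        mul_le_mul ha hb (Nat.cast_nonneg _) (by positivity)
      have hval : (1/θ)*(3/θ) = 30000/κ^4 := by
        rw [hθdef]
        field_simp
        ring
      have hx : (30000:ℝ)/κ^4 = (3/10)*(100000/κ^4) := by ring
      have hab : (Γ.card:ℝ) * (Γ3.card:ℝ) ≤ (2/3)*(n-1) := by linarith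
      calc (B1.card:ℝ) ≤ (Γ.card:ℝ) * ((Γ3.card:ℝ) * (M/(n-1))) := hB1real
        _ = ((Γ.card:ℝ) * (Γ3.card:ℝ)) * (M/(n-1)) := by ring
        _ ≤ ((2/3)*(n-1)) * (M/(n-1)) :=
            mul_le_mul_of_nonneg_right hab (div_nonneg hM0 hn1.le)
        _ = (2/3)*M := by field_simp
    have hG1sub : ∀ π ∈ G1, π ∈ univ.filter (fun π : Equiv.Perm (Fin N) =>
        IsPerfectMatching π ∧ κ / 12 ≤ (1 / 2) * ∑ i ∈ univ.filter (fun i =>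
          p i = 0 ∨ p (π i) = 0 ∨
            2 + κ ^ 2 / 16 ≤ p i / p (π i) + p (π i) / p i), (p i + p (π i))) := by
      intro π hπ
      rw [hG1def] at hπ
      obtain ⟨hm, hall⟩ := Finset.mem_filter.mp hπ
      have hpm : IsPerfectMatching π := (Finset.mem_filter.mp hm).2
      have hΓsub : Γ ⊆ univ.filter (CondP κ p π) := fun i hi =>
        Finset.mem_filter.mpr ⟨mem_univ _, hall i hi⟩
      have hgle : g ≤ ∑ i ∈ univ.filter (CondP κ p π), p i := by
        rw [hgdef]
        exact Finset.sum_le_sum_of_subset_of_nonneg hΓsub (fun i _ _ => hp0 i)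
      have hineq : κ/12 ≤ ∑ i ∈ univ.filter (CondP κ p π), p i := by linarith
      rw [← half_sum_eq κ p π hpm] at hineq
      exact Finset.mem_filter.mpr ⟨mem_univ _, hpm, hineq⟩
    have hcast : M = (G1.card:ℝ) + (B1.card:ℝ) := by
      rw [← hMMcard]
      exact_mod_cast hsplit.symm
    have hGoalcard : (G1.card:ℝ) ≤ (((univ.filter (fun π : Equiv.Perm (Fin N) =>
        IsPerfectMatching π ∧ κ / 12 ≤ (1 / 2) * ∑ i ∈ univ.filter (fun i =>
          p i = 0 ∨ p (π i) = 0 ∨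
            2 + κ ^ 2 / 16 ≤ p i / p (π i) + p (π i) / p i), (p i + p (π i)))).card : ℕ) : ℝ) := by
      exact_mod_cast Finset.card_le_card (fun π hπ => hG1sub π hπ)
    linarith
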